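/- Let 1 ≤ n ≤ m be integers, let A : {1,…,n} → ℝ and B : {1,…,m} → ℝ be nondecreasing, let X = max over all entries of A and B of their absolute values, and let M be a real number with M ≥ 10·n·m·(X+1). Then inf_{τ ∈ ℝ} max_{1≤i≤n} min_{1≤j≤m} | (A(i) + i·M + τ) − (B(j) + j·M) | = inf_{s ∈ {0,1,…,m−n}} inf_{c ∈ ℝ} max_{1≤i≤n} | (A(i) + c) − B(i+s) |. (Correctness of the reduction from the Linear Alignment problem to the one-dimensional directed Hausdorff distance under translation: with P = {A(i)+iM : 1≤i≤n} and Q = {B(j)+jM : 1≤j≤m}, the optimal directed Hausdorff distance of P to Q under translation equals the optimal Linear Alignment value.) -/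

import Mathlib

/-- Correctness of the reduction from the Linear Alignment problem to the
one-dimensional directed Hausdorff distance under translation: with
P = {A(i)+iM : 1 ≤ i ≤ n} and Q = {B(j)+jM : 1 ≤ j ≤ m}, the optimal directed
Hausdorff distance of P to Q under translation equals the optimal Linear
Alignment value. -/
theorem stmt8 (n m : ℕ) (hn : 1 ≤ n) (hnm : n ≤ m)
    (A B : ℕ → ℝ)
    (hA : MonotoneOn A (Set.Icc 1 n)) (hB : MonotoneOn B (Set.Icc 1 m))
    (X : ℝ)
    (hXA : ∀ i, 1 ≤ i → i ≤ n → |A i| ≤ X)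
    (hXB : ∀ j, 1 ≤ j → j ≤ m → |B j| ≤ X)
    (M : ℝ) (hM : 10 * n * m * (X + 1) ≤ M) :
    sInf {v : ℝ | ∃ τ : ℝ,
        v = (Finset.Icc 1 n).sup' (Finset.nonempty_Icc.mpr hn) fun i =>
              (Finset.Icc 1 m).inf' (Finset.nonempty_Icc.mpr (hn.trans hnm)) fun j =>
                |(A i + (i : ℝ) * M + τ) - (B j + (j : ℝ) * M)|} =
    sInf {v : ℝ | ∃ s : ℕ, s ≤ m - n ∧ ∃ c : ℝ,
        v = (Finset.Icc 1 n).sup' (Finset.nonempty_Icc.mpr hn) fun i =>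
              |(A i + c) - B (i + s)|} := by
  have hX0 : (0:ℝ) ≤ X := le_trans (abs_nonneg _) (hXA 1 le_rfl hn)
  have hn1 : (1:ℝ) ≤ (n:ℝ) := by exact_mod_cast hn
  have hm1 : (1:ℝ) ≤ (m:ℝ) := by exact_mod_cast hn.trans hnm
  have hnm1 : (1:ℝ) ≤ (n:ℝ) * m := by nlinarith
  have hM8 : 8 * X < M := by nlinarith [mul_le_mul_of_nonneg_right hnm1 (by linarith : (0:ℝ) ≤ X + 1)]
  have hMpos : 0 < M := by nlinarith
  have h1mem : (1:ℕ) ∈ Finset.Icc 1 n := Finset.mem_Icc.mpr ⟨le_rfl, hn⟩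
  -- nonnegativity / bddBelow of both sets
  have hbdd1 : BddBelow {v : ℝ | ∃ τ : ℝ,
        v = (Finset.Icc 1 n).sup' (Finset.nonempty_Icc.mpr hn) fun i =>
              (Finset.Icc 1 m).inf' (Finset.nonempty_Icc.mpr (hn.trans hnm)) fun j =>
                |(A i + (i : ℝ) * M + τ) - (B j + (j : ℝ) * M)|} := by
    refine ⟨0, ?_⟩
    rintro v ⟨τ, rfl⟩
    exact le_trans (Finset.le_inf' _ _ (fun j _ => abs_nonneg _))
      (Finset.le_sup' (fun i => (Finset.Icc 1 m).inf' (Finset.nonempty_Icc.mpr (hn.trans hnm))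
        fun j => |(A i + (i : ℝ) * M + τ) - (B j + (j : ℝ) * M)|) h1mem)
  have hbdd2 : BddBelow {v : ℝ | ∃ s : ℕ, s ≤ m - n ∧ ∃ c : ℝ,
        v = (Finset.Icc 1 n).sup' (Finset.nonempty_Icc.mpr hn) fun i =>
              |(A i + c) - B (i + s)|} := by
    refine ⟨0, ?_⟩
    rintro v ⟨s, hs, c, rfl⟩
    exact le_trans (abs_nonneg _) (Finset.le_sup' (fun i => |(A i + c) - B (i + s)|) h1mem)
  refine le_antisymm ?_ ?_
  · -- LHS ≤ RHS
    refine le_csInf ⟨_, 0, Nat.zero_le _, 0, rfl⟩ ?_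
    rintro v ⟨s, hs, c, rfl⟩
    refine csInf_le_of_le hbdd1 ⟨c + (s:ℝ) * M, rfl⟩ ?_
    refine Finset.sup'_le _ _ fun i hi => ?_
    rw [Finset.mem_Icc] at hi
    have hmem : i + s ∈ Finset.Icc 1 m := Finset.mem_Icc.mpr ⟨by omega, by omega⟩
    refine le_trans (Finset.inf'_le _ hmem) ?_
    have hrw : |(A i + (i:ℝ) * M + (c + (s:ℝ) * M)) - (B (i+s) + ((i+s : ℕ):ℝ) * M)|
        = |(A i + c) - B (i+s)| := by
      congr 1; push_cast; ring
    rw [hrw]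
    exact Finset.le_sup' (fun i => |(A i + c) - B (i + s)|) (Finset.mem_Icc.mpr ⟨hi.1, hi.2⟩)
  · -- RHS ≤ LHS
    refine le_csInf ⟨_, 0, rfl⟩ ?_
    rintro v ⟨τ, rfl⟩
    -- uniqueness of the shift
    have huniq : ∀ k k' : ℤ, |τ - (k:ℝ) * M| < 4 * X → |τ - (k':ℝ) * M| < 4 * X → k = k' := by
      intro k k' h1 h2
      by_contra hne
      have h3 : (1:ℤ) ≤ |k - k'| := Int.one_le_abs (sub_ne_zero.mpr hne)
      have h3' : (1:ℝ) ≤ |(k:ℝ) - (k':ℝ)| := by exact_mod_cast h3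
      have e0 : (τ - (k':ℝ)*M) - (τ - (k:ℝ)*M) = ((k:ℝ) - k') * M := by ring
      have e1 : |((k:ℝ) - k') * M| ≤ 8 * X := by
        have := abs_sub (τ - (k':ℝ)*M) (τ - (k:ℝ)*M)
        rw [e0] at this
        linarith
      have e2 : M ≤ |((k:ℝ) - k') * M| := by
        rw [abs_mul, abs_of_pos hMpos]
        nlinarith
      linarith
    have hest : ∀ i j : ℕ, 1 ≤ i → i ≤ n → 1 ≤ j → j ≤ m →
        |(A i + (i:ℝ) * M + τ) - (B j + (j:ℝ) * M)| < 2 * X →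
        |τ - ((j:ℝ) - (i:ℝ)) * M| < 4 * X := by
      intro i j hi1 hi2 hj1 hj2 h
      have hAi := hXA i hi1 hi2
      have hBj := hXB j hj1 hj2
      have e0 : τ - ((j:ℝ) - (i:ℝ)) * M
          = ((A i + (i:ℝ) * M + τ) - (B j + (j:ℝ) * M)) - A i + B j := by ring
      rw [e0]
      calc |((A i + (i:ℝ) * M + τ) - (B j + (j:ℝ) * M)) - A i + B j|
          ≤ |((A i + (i:ℝ) * M + τ) - (B j + (j:ℝ) * M)) - A i| + |B j| := abs_add_le _ _
        _ ≤ (|(A i + (i:ℝ) * M + τ) - (B j + (j:ℝ) * M)| + |A i|) + |B j| :=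
            add_le_add_left (abs_sub _ _) _
        _ < 4 * X := by linarith
    rcases lt_or_ge ((Finset.Icc 1 n).sup' (Finset.nonempty_Icc.mpr hn) fun i =>
        (Finset.Icc 1 m).inf' (Finset.nonempty_Icc.mpr (hn.trans hnm)) fun j =>
          |(A i + (i : ℝ) * M + τ) - (B j + (j : ℝ) * M)|) (2 * X) with hcase | hcase
    · -- small value: extract the common shift
      have hlt : ∀ i ∈ Finset.Icc 1 n,
          ((Finset.Icc 1 m).inf' (Finset.nonempty_Icc.mpr (hn.trans hnm)) fun j =>
            |(A i + (i : ℝ) * M + τ) - (B j + (j : ℝ) * M)|) < 2 * X :=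
        fun i hi => lt_of_le_of_lt (Finset.le_sup' (fun i => (Finset.Icc 1 m).inf'
          (Finset.nonempty_Icc.mpr (hn.trans hnm)) fun j =>
            |(A i + (i : ℝ) * M + τ) - (B j + (j : ℝ) * M)|) hi) hcase
      obtain ⟨j1, hj1m, hj1e⟩ := Finset.exists_mem_eq_inf' (Finset.nonempty_Icc.mpr (hn.trans hnm))
        (fun j => |(A 1 + ((1:ℕ):ℝ) * M + τ) - (B j + (j:ℝ) * M)|)
      rw [Finset.mem_Icc] at hj1m
      have hg1 : |(A 1 + ((1:ℕ):ℝ) * M + τ) - (B j1 + (j1:ℝ) * M)| < 2 * X := by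
        rw [← hj1e]; exact hlt 1 h1mem
      set s : ℕ := j1 - 1 with hsdef
      have hkey : ∀ i ∈ Finset.Icc 1 n, ∀ j ∈ Finset.Icc 1 m,
          |(A i + (i:ℝ) * M + τ) - (B j + (j:ℝ) * M)| < 2 * X → j = i + s := by
        intro i hi j hj h
        rw [Finset.mem_Icc] at hi hj
        have e1 := hest i j hi.1 hi.2 hj.1 hj.2 h
        have e2 := hest 1 j1 le_rfl hn hj1m.1 hj1m.2 hg1
        have := huniq ((j:ℤ) - (i:ℤ)) ((j1:ℤ) - 1) (by push_cast; exact e1) (by push_cast; push_cast at e2; exact e2)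
        omega
      -- minimizer for each i is i + s
      have hmin : ∀ i ∈ Finset.Icc 1 n,
          ((Finset.Icc 1 m).inf' (Finset.nonempty_Icc.mpr (hn.trans hnm)) fun j =>
            |(A i + (i : ℝ) * M + τ) - (B j + (j : ℝ) * M)|)
          = |(A i + (τ - (s:ℝ) * M)) - B (i + s)| := by
        intro i hi
        obtain ⟨j, hjm, hje⟩ := Finset.exists_mem_eq_inf' (Finset.nonempty_Icc.mpr (hn.trans hnm))
          (fun j => |(A i + (i:ℝ) * M + τ) - (B j + (j:ℝ) * M)|)
        have hjlt : |(A i + (i:ℝ) * M + τ) - (B j + (j:ℝ) * M)| < 2 * X := by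
          rw [← hje]; exact hlt i hi
        have hjeq : j = i + s := hkey i hi j hjm hjlt
        rw [hje, hjeq]
        congr 1; push_cast; ring
      have hsle : s ≤ m - n := by
        obtain ⟨j, hjm, hje⟩ := Finset.exists_mem_eq_inf' (Finset.nonempty_Icc.mpr (hn.trans hnm))
          (fun j => |(A n + (n:ℝ) * M + τ) - (B j + (j:ℝ) * M)|)
        have hnmem : n ∈ Finset.Icc 1 n := Finset.mem_Icc.mpr ⟨hn, le_rfl⟩
        have hjlt : |(A n + (n:ℝ) * M + τ) - (B j + (j:ℝ) * M)| < 2 * X := by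
          rw [← hje]; exact hlt n hnmem
        have hjeq : j = n + s := hkey n hnmem j hjm hjlt
        rw [Finset.mem_Icc] at hjm
        omega
      refine csInf_le hbdd2 ⟨s, hsle, τ - (s:ℝ) * M, ?_⟩
      exact Finset.sup'_congr _ rfl hmin
    · -- large value: compare with the trivial alignment s = 0, c = 0
      refine csInf_le_of_le hbdd2 ⟨0, Nat.zero_le _, 0, rfl⟩ ?_
      refine le_trans (Finset.sup'_le _ _ fun i hi => ?_) hcase
      rw [Finset.mem_Icc] at hi
      have h1 : |(A i + 0) - B (i + 0)| ≤ |A i| + |B i| := by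
        simpa using abs_sub (A i) (B (i + 0))
      have hAi := hXA i hi.1 hi.2
      have hBi := hXB i hi.1 (hi.2.trans hnm)
      linarith
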